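/- Let r > d > 0, (x₀,y₀) ∈ (0,1)², x₀ ≠ y₀. Then for all s ∈ [0, s₀), the point (x_s, y_s) belongs to (0,1)², and at s = s₀ one has x_{s₀} = 0 and y_{s₀} = 0. -/

import Mathlib

/-- The coefficient `Q(x,y) = (r+d)x − r/2 − (r/2)(x/y) − d·x²`. -/
noncomputable def Qfun (r d x y : ℝ) : ℝ :=
  (r + d) * x - r / 2 - r / 2 * (x / y) - d * x ^ 2

/-- The coefficient `R(x,y) = r/(2x) + r/(2y) − d·x − d·y`. -/
noncomputable def Rfun (r d x y : ℝ) : ℝ :=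
  r / (2 * x) + r / (2 * y) - d * x - d * y

/-- The integration constant `λ = (2d·x₀y₀ − d(x₀+y₀))/((x₀−y₀)(r−d))`. -/
noncomputable def lamOf (r d x₀ y₀ : ℝ) : ℝ :=
  (2 * d * x₀ * y₀ - d * (x₀ + y₀)) / ((x₀ - y₀) * (r - d))

/-- The integration constant `μ = (−2d·x₀y₀ + r(x₀+y₀))/((x₀−y₀)(r−d))`. -/
noncomputable def muOf (r d x₀ y₀ : ℝ) : ℝ :=
  (-(2 * d * x₀ * y₀) + r * (x₀ + y₀)) / ((x₀ - y₀) * (r - d))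

/-- The characteristic curve `x_s = (λre^{rs} + μde^{ds})/(d(λe^{rs} + μe^{ds} + 1))`. -/
noncomputable def xChar (r d lam mu s : ℝ) : ℝ :=
  (lam * r * Real.exp (r * s) + mu * d * Real.exp (d * s))
    / (d * (lam * Real.exp (r * s) + mu * Real.exp (d * s) + 1))

/-- The characteristic curve `y_s = (λre^{rs} + μde^{ds})/(d(λe^{rs} + μe^{ds} − 1))`. -/
noncomputable def yChar (r d lam mu s : ℝ) : ℝ :=
  (lam * r * Real.exp (r * s) + mu * d * Real.exp (d * s))
    / (d * (lam * Real.exp (r * s) + mu * Real.exp (d * s) - 1))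

/-- The time `s₀ = log((x₀ + y₀ − 2x₀y₀)/(x₀ + y₀ − 2(d/r)x₀y₀))/(d − r)`. -/
noncomputable def s0Of (r d x₀ y₀ : ℝ) : ℝ :=
  Real.log ((x₀ + y₀ - 2 * x₀ * y₀) / (x₀ + y₀ - 2 * (d / r) * x₀ * y₀)) / (d - r)

lemma lamOf_swap (r d x₀ y₀ : ℝ) : lamOf r d y₀ x₀ = -lamOf r d x₀ y₀ := by
  unfold lamOf
  rw [show (y₀ - x₀) * (r - d) = -((x₀ - y₀) * (r - d)) by ring, div_neg]
  ring_nf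

lemma muOf_swap (r d x₀ y₀ : ℝ) : muOf r d y₀ x₀ = -muOf r d x₀ y₀ := by
  unfold muOf
  rw [show (y₀ - x₀) * (r - d) = -((x₀ - y₀) * (r - d)) by ring, div_neg]
  ring_nf

lemma s0Of_swap (r d x₀ y₀ : ℝ) : s0Of r d y₀ x₀ = s0Of r d x₀ y₀ := by
  unfold s0Of
  ring_nf

lemma xChar_neg (r d l m s : ℝ) : xChar r d (-l) (-m) s = yChar r d l m s := by
  unfold xChar yChar
  rw [show -l * r * Real.exp (r * s) + -m * d * Real.exp (d * s)
        = -(l * r * Real.exp (r * s) + m * d * Real.exp (d * s)) by ring,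
      show d * (-l * Real.exp (r * s) + -m * Real.exp (d * s) + 1)
        = -(d * (l * Real.exp (r * s) + m * Real.exp (d * s) - 1)) by ring,
      neg_div_neg_eq]

lemma yChar_neg (r d l m s : ℝ) : yChar r d (-l) (-m) s = xChar r d l m s := by
  unfold xChar yChar
  rw [show -l * r * Real.exp (r * s) + -m * d * Real.exp (d * s)
        = -(l * r * Real.exp (r * s) + m * d * Real.exp (d * s)) by ring,
      show d * (-l * Real.exp (r * s) + -m * Real.exp (d * s) - 1)
        = -(d * (l * Real.exp (r * s) + m * Real.exp (d * s) + 1)) by ring,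
      neg_div_neg_eq]

set_option maxHeartbeats 1600000 in
lemma char_curve_core (r d x₀ y₀ : ℝ) (hd : 0 < d) (hrd : d < r)
    (hx₀ : x₀ ∈ Set.Ioo (0 : ℝ) 1) (hy₀ : y₀ ∈ Set.Ioo (0 : ℝ) 1) (hlt : y₀ < x₀) :
    (∀ s ∈ Set.Ico (0 : ℝ) (s0Of r d x₀ y₀),
      xChar r d (lamOf r d x₀ y₀) (muOf r d x₀ y₀) s ∈ Set.Ioo (0 : ℝ) 1 ∧
      yChar r d (lamOf r d x₀ y₀) (muOf r d x₀ y₀) s ∈ Set.Ioo (0 : ℝ) 1) ∧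
    xChar r d (lamOf r d x₀ y₀) (muOf r d x₀ y₀) (s0Of r d x₀ y₀) = 0 ∧
    yChar r d (lamOf r d x₀ y₀) (muOf r d x₀ y₀) (s0Of r d x₀ y₀) = 0 := by
  obtain ⟨hx0, hx1⟩ := hx₀
  obtain ⟨hy0, hy1⟩ := hy₀
  have hr : 0 < r := hd.trans hrd
  have hδ : 0 < x₀ - y₀ := sub_pos.2 hlt
  have hrd' : 0 < r - d := sub_pos.2 hrd
  have hD : 0 < (x₀ - y₀) * (r - d) := mul_pos hδ hrd'
  set l := lamOf r d x₀ y₀ with hl_def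
  set m := muOf r d x₀ y₀ with hm_def
  set s₀ := s0Of r d x₀ y₀ with hs₀_def
  have hl : l = (2 * d * x₀ * y₀ - d * (x₀ + y₀)) / ((x₀ - y₀) * (r - d)) := rfl
  have hm : m = (-(2 * d * x₀ * y₀) + r * (x₀ + y₀)) / ((x₀ - y₀) * (r - d)) := rfl
  have ha : 0 < x₀ + y₀ - 2 * x₀ * y₀ := by nlinarith
  have hB : 0 < r * (x₀ + y₀) - 2 * d * x₀ * y₀ := by nlinarith
  set a := x₀ + y₀ - 2 * x₀ * y₀ with ha_def
  set b := x₀ + y₀ - 2 * (d / r) * x₀ * y₀ with hb_def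
  set K := a / b with hK_def
  have hs0eq : s₀ = Real.log K / (d - r) := rfl
  clear_value K
  clear_value b a s₀ m l
  have hbr : b = (r * (x₀ + y₀) - 2 * d * x₀ * y₀) / r := by
    rw [hb_def]; field_simp
  have hb0 : 0 < b := hbr ▸ div_pos hB hr
  have hK0 : 0 < K := hK_def ▸ div_pos ha hb0
  have hK1 : K < 1 := by
    rw [hK_def, div_lt_one hb0, hbr, lt_div_iff₀ hr, ha_def]; nlinarith [mul_pos (mul_pos hx0 hy0) hrd']
  have hs0pos : 0 < s₀ := by
    rw [hs0eq]
    exact div_pos_of_neg_of_neg (Real.log_neg hK0 hK1) (by linarith)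
  have hexp : Real.exp ((d - r) * s₀) = K := by
    rw [hs0eq, mul_comm, div_mul_cancel₀ _ (show d - r ≠ 0 by linarith)]
    exact Real.exp_log hK0
  have hexp' : Real.exp ((r - d) * s₀) = b / a := by
    rw [show (r - d) * s₀ = -((d - r) * s₀) by ring, Real.exp_neg, hexp, hK_def, inv_div]
  have hlval : l * ((x₀ - y₀) * (r - d)) = 2 * d * x₀ * y₀ - d * (x₀ + y₀) := by
    rw [hl]; field_simp
  have hmval : m * ((x₀ - y₀) * (r - d)) = -(2 * d * x₀ * y₀) + r * (x₀ + y₀) := by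
    rw [hm]; field_simp
  have hl_neg : l < 0 := by
    rw [hl]; exact div_neg_of_neg_of_pos (by nlinarith) hD
  have hm_pos : 0 < m := by
    rw [hm]; exact div_pos (by nlinarith) hD
  have hlr : l * r < 0 := mul_neg_of_neg_of_pos hl_neg hr
  -- the key identity
  have hkey : l * r * b + m * d * a = 0 := by
    rw [hl, hm, hbr, ha_def]
    field_simp
    ring
  -- g(s₀) = 0
  have hg0 : l * r * Real.exp ((r - d) * s₀) + m * d = 0 := by
    rw [hexp']
    have hane : a ≠ 0 := ne_of_gt ha
    field_simp
    linear_combination hkey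
  -- g(s) > 0 for s < s₀
  have hgpos : ∀ s : ℝ, s < s₀ → 0 < l * r * Real.exp ((r - d) * s) + m * d := by
    intro s hs
    have h1 : Real.exp ((r - d) * s) < Real.exp ((r - d) * s₀) :=
      Real.exp_lt_exp.2 (mul_lt_mul_of_pos_left hs hrd')
    nlinarith [mul_pos (neg_pos.2 hlr) (sub_pos.2 h1)]
  have hNfac : ∀ s : ℝ, l * r * Real.exp (r * s) + m * d * Real.exp (d * s)
      = Real.exp (d * s) * (l * r * Real.exp ((r - d) * s) + m * d) := by
    intro s
    rw [show r * s = d * s + (r - d) * s by ring, Real.exp_add]; ring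
  -- m*(r-d) > r
  have hm_big : r < m * (r - d) := by
    nlinarith [hmval, hδ, mul_pos hy0 (show (0:ℝ) < r - d * x₀ by nlinarith)]
  -- l*(r-d) < -d
  have hld : l * (r - d) < -d := by
    nlinarith [hlval, hδ, mul_pos (mul_pos hd hy0) (show (0:ℝ) < 1 - x₀ by linarith)]
  -- P(s) > 1 for s ∈ [0, s₀)
  have hP1 : ∀ s : ℝ, 0 ≤ s → s < s₀ →
      1 < l * Real.exp (r * s) + m * Real.exp (d * s) := by
    intro s hs0 hs1
    have hg := (hgpos s hs1).le
    have hN : 0 ≤ l * r * Real.exp (r * s) + m * d * Real.exp (d * s) := by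
      rw [hNfac]; exact mul_nonneg (Real.exp_nonneg _) hg
    have hmF : m ≤ m * Real.exp (d * s) := by
      nlinarith [Real.one_le_exp (mul_nonneg hd.le hs0), hm_pos]
    nlinarith [hN, hm_big, mul_nonneg (sub_nonneg.2 hmF) hrd'.le]
  -- N(s) < d*(P(s) - 1) for s ≥ 0
  have hNlt : ∀ s : ℝ, 0 ≤ s →
      l * r * Real.exp (r * s) + m * d * Real.exp (d * s)
        < d * (l * Real.exp (r * s) + m * Real.exp (d * s) - 1) := by
    intro s hs
    have hE1 : 1 ≤ Real.exp (r * s) := Real.one_le_exp (mul_nonneg hr.le hs)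
    have h2 : l * (r - d) * Real.exp (r * s) ≤ l * (r - d) := by
      nlinarith [mul_nonpos_of_nonpos_of_nonneg (by linarith : l * (r - d) ≤ 0)
        (by linarith : (0:ℝ) ≤ Real.exp (r * s) - 1)]
    nlinarith [h2, hld]
  constructor
  · intro s hs
    obtain ⟨hs0, hs1⟩ := hs
    have hg := hgpos s hs1
    have hN : 0 < l * r * Real.exp (r * s) + m * d * Real.exp (d * s) := by
      rw [hNfac]; exact mul_pos (Real.exp_pos _) hg
    have hP := hP1 s hs0 hs1
    have hdm : 0 < d * (l * Real.exp (r * s) + m * Real.exp (d * s) - 1) :=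
      mul_pos hd (by linarith)
    have hdp : 0 < d * (l * Real.exp (r * s) + m * Real.exp (d * s) + 1) :=
      mul_pos hd (by linarith)
    have hxy : xChar r d l m s < yChar r d l m s := by
      unfold xChar yChar
      exact div_lt_div_of_pos_left hN hdm (by nlinarith)
    have hy_lt : yChar r d l m s < 1 := by
      unfold yChar
      rw [div_lt_one hdm]
      exact hNlt s hs0
    refine ⟨⟨?_, ?_⟩, ⟨?_, hy_lt⟩⟩
    · exact div_pos hN hdp
    · linarith
    · exact div_pos hN hdm
  · constructor
    · unfold xChar
      rw [hNfac s₀, hg0, mul_zero, zero_div]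
    · unfold yChar
      rw [hNfac s₀, hg0, mul_zero, zero_div]

/-- for `s ∈ [0, s₀)` the characteristic curve `(x_s, y_s)` stays in
`(0,1)²`, and at `s = s₀` one has `x_{s₀} = y_{s₀} = 0`. -/
theorem char_curve_in_unit_square (r d x₀ y₀ : ℝ) (hd : 0 < d) (hrd : d < r)
    (hx₀ : x₀ ∈ Set.Ioo (0 : ℝ) 1) (hy₀ : y₀ ∈ Set.Ioo (0 : ℝ) 1) (hne : x₀ ≠ y₀) :
    (∀ s ∈ Set.Ico (0 : ℝ) (s0Of r d x₀ y₀),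
      xChar r d (lamOf r d x₀ y₀) (muOf r d x₀ y₀) s ∈ Set.Ioo (0 : ℝ) 1 ∧
      yChar r d (lamOf r d x₀ y₀) (muOf r d x₀ y₀) s ∈ Set.Ioo (0 : ℝ) 1) ∧
    xChar r d (lamOf r d x₀ y₀) (muOf r d x₀ y₀) (s0Of r d x₀ y₀) = 0 ∧
    yChar r d (lamOf r d x₀ y₀) (muOf r d x₀ y₀) (s0Of r d x₀ y₀) = 0 := by
  rcases hne.lt_or_gt with h | h
  · have H := char_curve_core r d y₀ x₀ hd hrd hy₀ hx₀ h
    rw [lamOf_swap, muOf_swap, s0Of_swap] at H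
    simp only [xChar_neg, yChar_neg] at H
    obtain ⟨H1, H2, H3⟩ := H
    exact ⟨fun s hs => ⟨(H1 s hs).2, (H1 s hs).1⟩, H3, H2⟩
  · exact char_curve_core r d x₀ y₀ hd hrd hx₀ hy₀ h
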